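/- A connection ∇' satisfies ∇'J = 0 if and only if ∇' = ∇⁰ + Q where Q is a (1,2)-tensor satisfying Q(X, JY) = J·Q(X,Y) for all X, Y, with ∇⁰_X Y = ∇_X Y − (1/2)(∇_X J)(JY) for a fixed connection ∇. -/
import Mathlib


/-- A connection `∇'` satisfies `∇'J = 0` iff `∇' = ∇⁰ + Q` for a (1,2)-tensor `Q` with
`Q(X,JY) = J·Q(X,Y)`, where `∇⁰_X Y = ∇_X Y − (1/2)(∇_X J)(JY)` for a fixed
connection `∇`. Connections are modelled as bilinear maps on vector fields, so their
difference is a bilinear (1,2)-tensor. -/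
theorem adapted_iff_firstCanonical_plus_Q {V : Type*} [AddCommGroup V] [Module ℝ V]
    (J : V →ₗ[ℝ] V) (hJ : J ∘ₗ J = LinearMap.id)
    (nab : V →ₗ[ℝ] V →ₗ[ℝ] V) (nab' : V →ₗ[ℝ] V →ₗ[ℝ] V) :
    (∀ X Y : V, nab' X (J Y) = J (nab' X Y)) ↔
      ∃ Q : V →ₗ[ℝ] V →ₗ[ℝ] V,
        (∀ X Y : V, Q X (J Y) = J (Q X Y)) ∧
        (∀ X Y : V, nab' X Y
          = nab X Y - ((1 : ℝ)/2) • (nab X (J (J Y)) - J (nab X (J Y))) + Q X Y) := by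
  have hJJ : ∀ v : V, J (J v) = v := fun v => congrFun (congrArg DFunLike.coe hJ) v
  constructor
  · intro h
    refine ⟨LinearMap.mk₂ ℝ
      (fun X Y => nab' X Y - (nab X Y - ((1:ℝ)/2) • (nab X (J (J Y)) - J (nab X (J Y)))))
      (fun X X' Y => by simp only [map_add, LinearMap.add_apply]; module)
      (fun c X Y => by simp only [map_smul, LinearMap.smul_apply]; module)
      (fun X Y Y' => by simp only [map_add]; module)
      (fun c X Y => by simp only [map_smul]; module), ?_, ?_⟩
    · intro X Y
      simp only [LinearMap.mk₂_apply, hJJ, h, map_sub, map_smul]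
      module
    · intro X Y
      simp only [LinearMap.mk₂_apply]
      abel
  · rintro ⟨Q, hQ, hE⟩ X Y
    rw [hE X (J Y), hE X Y, hQ]
    simp only [hJJ, map_add, map_sub, map_smul]
    module
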